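/- For every t with 0 ≤ t < 1/6, the derivative of z₁ satisfies z₁′(t) = (a(t)·z₀(t))/(q(t)·c(t)) − (10·d(t)·z₁(t))/(3·q(t)·c(t)) − (6·a(t)·z₂(t)·z₁(t))/(q(t)·c(t)) − (2·y(t)·z₁(t))/q(t). -/

import Mathlib

set_option maxHeartbeats 2000000


noncomputable def pFun (t : ℝ) : ℝ := 1 - 6 * t

noncomputable def rFun (s t : ℝ) : ℝ := Real.exp (-(7776 / 25) * (1 - s) ^ 2 * t ^ 3)

noncomputable def qFun (t : ℝ) : ℝ := pFun t ^ 3 / 6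

noncomputable def yFun (t : ℝ) : ℝ := pFun t ^ 2

noncomputable def aFun (s t : ℝ) : ℝ := (5 / 6) * s * (1 - s) ^ 2 * pFun t ^ 5 * rFun s t ^ 2

noncomputable def c1Fun (s t : ℝ) : ℝ := (5 / 6) * s * (1 - s) * pFun t ^ 2 * rFun s t

noncomputable def c2Fun (s t : ℝ) : ℝ := (5 / 6) * (1 - s) ^ 2 * pFun t ^ 3 * rFun s t ^ 2

noncomputable def cFun (s t : ℝ) : ℝ := c1Fun s t * c2Fun s t

noncomputable def dFun (s t : ℝ) : ℝ := (5 / 6) * s * (1 - s) ^ 3 * pFun t ^ 7 * rFun s t ^ 3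

noncomputable def z0Fun (s t : ℝ) : ℝ := (5 / 6) * (1 - s) ^ 5 * pFun t ^ 9 * rFun s t ^ 3

noncomputable def z1Fun (s t : ℝ) : ℝ := (1 - s) ^ 4 * (1 - pFun t) * pFun t ^ 6 * rFun s t ^ 2

noncomputable def z2Fun (s t : ℝ) : ℝ :=
  (6 / 5) * (1 - s) ^ 3 * (1 - pFun t) ^ 2 * pFun t ^ 3 * rFun s t

theorem z1_hasDerivAt (s : ℝ) (hs0 : 0 < s) (hs1 : s < 1) (t : ℝ)
    (ht0 : 0 ≤ t) (ht : t < 1 / 6) :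
    HasDerivAt (z1Fun s)
      ((aFun s t * z0Fun s t) / (qFun t * cFun s t)
        - (10 * dFun s t * z1Fun s t) / (3 * qFun t * cFun s t)
        - (6 * aFun s t * z2Fun s t * z1Fun s t) / (qFun t * cFun s t)
        - (2 * yFun t * z1Fun s t) / qFun t) t := by
  have hp0 : 0 < pFun t := by unfold pFun; linarith
  have hpne : pFun t ≠ 0 := ne_of_gt hp0
  have hr0 : rFun s t ≠ 0 := Real.exp_ne_zero _
  have hsne : s ≠ 0 := ne_of_gt hs0
  have hs1ne : (1 : ℝ) - s ≠ 0 := by linarith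
  -- derivative of p
  have hp : HasDerivAt pFun (-6) t := by
    have : HasDerivAt (fun t : ℝ => 1 - 6 * t) (0 - 6 * 1) t :=
      (hasDerivAt_const t (1:ℝ)).sub ((hasDerivAt_id t).const_mul 6)
    have h' : HasDerivAt (fun t : ℝ => 1 - 6 * t) (-6) t := by simpa using this
    exact h'
  -- derivative of r
  have hu : HasDerivAt (fun t : ℝ => -(7776 / 25) * (1 - s) ^ 2 * t ^ 3)
      (-(7776 / 25) * (1 - s) ^ 2 * (3 * t ^ 2)) t := by
    have := (hasDerivAt_pow 3 t).const_mul (-(7776 / 25) * (1 - s) ^ 2)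
    simpa [mul_comm, mul_assoc, mul_left_comm] using this
  have hr : HasDerivAt (rFun s)
      (rFun s t * (-(7776 / 25) * (1 - s) ^ 2 * (3 * t ^ 2))) t := hu.exp
  have h1 : HasDerivAt (fun u => (1 - s) ^ 4 * (1 - pFun u)) ((1 - s) ^ 4 * 6) t := by
    have := ((hasDerivAt_const t (1:ℝ)).sub hp).const_mul ((1 - s) ^ 4)
    simpa using this
  have h2 : HasDerivAt (fun u => pFun u ^ 6) (6 * pFun t ^ 5 * (-6)) t := by
    simpa using hp.fun_pow 6
  have h3 : HasDerivAt (fun u => rFun s u ^ 2)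
      (2 * rFun s t ^ 1 * (rFun s t * (-(7776 / 25) * (1 - s) ^ 2 * (3 * t ^ 2)))) t := by
    simpa using hr.fun_pow 2
  have hz := (h1.mul h2).mul h3
  have hqc : qFun t * cFun s t = (25 / 216) * s * (1 - s) ^ 3 * pFun t ^ 8 * rFun s t ^ 3 := by
    unfold qFun cFun c1Fun c2Fun; ring
  have e1 : (aFun s t * z0Fun s t) / (qFun t * cFun s t)
      = 6 * (1 - s) ^ 4 * pFun t ^ 6 * rFun s t ^ 2 := by
    rw [hqc]; unfold aFun z0Fun
    rw [div_eq_iff (by positivity)]; ring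
  have e2 : (10 * dFun s t * z1Fun s t) / (3 * qFun t * cFun s t)
      = 24 * (1 - s) ^ 4 * (1 - pFun t) * pFun t ^ 5 * rFun s t ^ 2 := by
    rw [show 3 * qFun t * cFun s t = 3 * (qFun t * cFun s t) from by ring, hqc]
    unfold dFun z1Fun
    rw [div_eq_iff (by positivity)]; ring
  have e3 : (6 * aFun s t * z2Fun s t * z1Fun s t) / (qFun t * cFun s t)
      = (1296 / 25) * (1 - s) ^ 6 * (1 - pFun t) ^ 3 * pFun t ^ 6 * rFun s t ^ 2 := by
    rw [hqc]; unfold aFun z2Fun z1Fun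
    rw [div_eq_iff (by positivity)]; ring
  have e4 : (2 * yFun t * z1Fun s t) / qFun t
      = 12 * (1 - s) ^ 4 * (1 - pFun t) * pFun t ^ 5 * rFun s t ^ 2 := by
    unfold yFun z1Fun qFun
    rw [div_eq_iff (by positivity)]; ring
  have heq : ((1 - s) ^ 4 * 6 * pFun t ^ 6 +
        (1 - s) ^ 4 * (1 - pFun t) * (6 * pFun t ^ 5 * (-6))) * rFun s t ^ 2 +
      (1 - s) ^ 4 * (1 - pFun t) * pFun t ^ 6 *
        (2 * rFun s t ^ 1 * (rFun s t * (-(7776 / 25) * (1 - s) ^ 2 * (3 * t ^ 2)))) =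
      (aFun s t * z0Fun s t) / (qFun t * cFun s t)
        - (10 * dFun s t * z1Fun s t) / (3 * qFun t * cFun s t)
        - (6 * aFun s t * z2Fun s t * z1Fun s t) / (qFun t * cFun s t)
        - (2 * yFun t * z1Fun s t) / qFun t := by
    rw [e1, e2, e3, e4]
    have hpt : pFun t = 1 - 6 * t := rfl
    rw [hpt]; ring
  rw [← heq]
  exact hz
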